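/- Let f : ℝ^d → ℝ be L-smooth and μ-strongly convex with minimizer x⋆, and let C ∈ B³(δ). For compressed gradient descent x^{k+1} = x^k − η C^k(∇f(x^k)) with 0 ≤ η ≤ 1/L, we have E[f(x^k)] − f(x⋆) ≤ (1 − ημ/δ)^k (f(x⁰) − f(x⋆)). -/

import Mathlib

open MeasureTheory

/-- The iterates of compressed gradient descent `x^{n+1} = x^n − η C^n(∇f(x^n))`,
where the compressor at step `n` uses the fresh randomness `ω (Fin.last n)`. -/
noncomputable def cgdIter {d : ℕ} {Ω₀ : Type*}
    (C : ℕ → EuclideanSpace ℝ (Fin d) → Ω₀ → EuclideanSpace ℝ (Fin d))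
    (f' : EuclideanSpace ℝ (Fin d) → EuclideanSpace ℝ (Fin d))
    (η : ℝ) (x0 : EuclideanSpace ℝ (Fin d)) :
    (n : ℕ) → (Fin n → Ω₀) → EuclideanSpace ℝ (Fin d)
  | 0, _ => x0
  | (n + 1), ω =>
      cgdIter C f' η x0 n (ω ∘ Fin.castSucc) -
        η • C n (f' (cgdIter C f' η x0 n (ω ∘ Fin.castSucc))) (ω (Fin.last n))

/-- Compressed gradient descent with independent compressors `C^k ∈ B³(δ)` on an
`L`-smooth, `μ`-strongly convex `f` with minimizer `x⋆`: for `0 ≤ η ≤ 1/L`,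
`E[f(x^k)] − f(x⋆) ≤ (1 − ημ/δ)^k (f(x⁰) − f(x⋆))`. Independence of the
compressors across iterations is modeled by the product probability measure. -/
theorem stmt15 {d : ℕ} (hd : 0 < d) {Ω₀ : Type*} [MeasurableSpace Ω₀]
    (P : Measure Ω₀) [IsProbabilityMeasure P]
    (f : EuclideanSpace ℝ (Fin d) → ℝ)
    (f' : EuclideanSpace ℝ (Fin d) → EuclideanSpace ℝ (Fin d))
    (L μ : ℝ) (hμ : 0 < μ) (hμL : μ ≤ L)
    (hf : Continuous f) (hf' : Continuous f')
    (hsmooth : ∀ x y, f y ≤ f x + (inner ℝ (f' x) (y - x) : ℝ) + L / 2 * ‖y - x‖ ^ 2)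
    (hstrong : ∀ x y, f x + (inner ℝ (f' x) (y - x) : ℝ) + μ / 2 * ‖y - x‖ ^ 2 ≤ f y)
    (xstar : EuclideanSpace ℝ (Fin d)) (hmin : ∀ x, f xstar ≤ f x)
    (C : ℕ → EuclideanSpace ℝ (Fin d) → Ω₀ → EuclideanSpace ℝ (Fin d))
    (hCmeas : ∀ n, Measurable (Function.uncurry (C n)))
    (δ : ℝ) (hδ : 0 < δ)
    (hintC : ∀ n g, Integrable (C n g) P)
    (hintC2 : ∀ n g, Integrable (fun ω => ‖C n g ω‖ ^ 2) P)
    (hB : ∀ n g, ∫ ω, ‖C n g ω - g‖ ^ 2 ∂P ≤ (1 - 1 / δ) * ‖g‖ ^ 2)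
    (η : ℝ) (hη0 : 0 ≤ η) (hη : η ≤ 1 / L)
    (x0 : EuclideanSpace ℝ (Fin d))
    (hintf : ∀ n, Integrable (fun ω => f (cgdIter C f' η x0 n ω))
      (Measure.pi fun _ : Fin n => P)) :
    ∀ k : ℕ,
      (∫ ω, f (cgdIter C f' η x0 k ω) ∂(Measure.pi fun _ : Fin k => P)) - f xstar
        ≤ (1 - η * μ / δ) ^ k * (f x0 - f xstar) := by
  have hL : 0 < L := lt_of_lt_of_le hμ hμL
  have hηL : η * L ≤ 1 := by
    rw [le_div_iff₀ hL] at hη; exact hη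
  -- δ ≥ 1
  have hδ1 : 1 ≤ δ := by
    set g₀ : EuclideanSpace ℝ (Fin d) := EuclideanSpace.single ⟨0, hd⟩ (1 : ℝ)
    have hg₀ : ‖g₀‖ = 1 := by
      simp [g₀, EuclideanSpace.norm_single]
    have h0 : (0 : ℝ) ≤ ∫ ω, ‖C 0 g₀ ω - g₀‖ ^ 2 ∂P :=
      integral_nonneg fun a => sq_nonneg _
    have h1 := hB 0 g₀
    rw [hg₀] at h1
    have h2 : (0 : ℝ) ≤ 1 - 1 / δ := by nlinarith
    rw [sub_nonneg, div_le_one hδ] at h2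
    exact h2
  have hr0 : 0 ≤ 1 - η * μ / δ := by
    have h1 : η * μ ≤ 1 := by nlinarith
    have h2 : η * μ / δ ≤ 1 := by
      rw [div_le_one hδ]; nlinarith
    linarith
  -- Polyak–Łojasiewicz inequality from strong convexity
  have hPL : ∀ x, 2 * μ * (f x - f xstar) ≤ ‖f' x‖ ^ 2 := by
    intro x
    have h1 := hstrong x xstar
    have h2 : ‖f' x + μ • (xstar - x)‖ ^ 2 =
        ‖f' x‖ ^ 2 + 2 * (μ * (inner ℝ (f' x) (xstar - x) : ℝ)) + μ ^ 2 * ‖xstar - x‖ ^ 2 := by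
      rw [norm_add_sq_real, real_inner_smul_right, norm_smul, Real.norm_eq_abs,
        abs_of_pos hμ]
      ring
    nlinarith [sq_nonneg ‖f' x + μ • (xstar - x)‖, sq_nonneg ‖xstar - x‖]
  -- one-step descent bound
  have hstep : ∀ (n : ℕ) (x : EuclideanSpace ℝ (Fin d)),
      Integrable (fun a => f (x - η • C n (f' x) a)) P →
      ∫ a, f (x - η • C n (f' x) a) ∂P ≤
        (1 - η * μ / δ) * f x + (η * μ / δ) * f xstar := by
    intro n x hsl
    set g := f' x with hg
    set K := C n g with hK
    have hKint := hintC n g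
    have hK2 := hintC2 n g
    have hinner : Integrable (fun a => (inner ℝ g (K a) : ℝ)) P := hKint.const_inner g
    have hpt : ∀ a, f (x - η • K a) ≤
        f x - η * (inner ℝ g (K a) : ℝ) + L * η ^ 2 / 2 * ‖K a‖ ^ 2 := by
      intro a
      have h := hsmooth x (x - η • K a)
      have h1 : x - η • K a - x = -(η • K a) := by abel
      rw [h1, inner_neg_right, real_inner_smul_right, norm_neg, norm_smul,
        Real.norm_eq_abs, abs_of_nonneg hη0] at h
      nlinarith [h]
    have hmul : Integrable (fun a => η * (inner ℝ g (K a) : ℝ)) P := hinner.const_mul η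
    have hmul2 : Integrable (fun a => 2 * (inner ℝ g (K a) : ℝ)) P := hinner.const_mul 2
    have hA : Integrable (fun a => f x - η * (inner ℝ g (K a) : ℝ)) P :=
      (integrable_const (f x)).sub hmul
    have hK2' : Integrable (fun a => L * η ^ 2 / 2 * ‖K a‖ ^ 2) P := hK2.const_mul _
    have hRint : Integrable
        (fun a => f x - η * (inner ℝ g (K a) : ℝ) + L * η ^ 2 / 2 * ‖K a‖ ^ 2) P :=
      hA.add hK2'
    have hmono := integral_mono hsl hRint hpt
    set I1 := ∫ a, (inner ℝ g (K a) : ℝ) ∂P with hI1def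
    set I2 := ∫ a, ‖K a‖ ^ 2 ∂P with hI2def
    have hR : ∫ a, (f x - η * (inner ℝ g (K a) : ℝ) + L * η ^ 2 / 2 * ‖K a‖ ^ 2) ∂P
        = f x - η * I1 + L * η ^ 2 / 2 * I2 := by
      rw [integral_add hA hK2', integral_sub (integrable_const (f x)) hmul,
        integral_const, integral_const_mul, integral_const_mul, probReal_univ, one_smul]
    rw [hR] at hmono
    have hexp : ∀ a, ‖K a - g‖ ^ 2 = ‖K a‖ ^ 2 - 2 * (inner ℝ g (K a) : ℝ) + ‖g‖ ^ 2 := by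
      intro a
      rw [norm_sub_sq_real, real_inner_comm]
    have hBint : ∫ a, ‖K a - g‖ ^ 2 ∂P = I2 - 2 * I1 + ‖g‖ ^ 2 := by
      simp_rw [hexp]
      have hC : Integrable (fun a => ‖K a‖ ^ 2 - 2 * (inner ℝ g (K a) : ℝ)) P :=
        hK2.sub hmul2
      rw [integral_add hC (integrable_const _), integral_sub hK2 hmul2,
        integral_const_mul, integral_const, probReal_univ, one_smul]
    have hBB := hB n g
    rw [hBint] at hBB
    have hkey : ‖g‖ ^ 2 / δ ≤ 2 * I1 - I2 := by
      have hq : (1 - 1 / δ) * ‖g‖ ^ 2 = ‖g‖ ^ 2 - ‖g‖ ^ 2 / δ := by ring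
      rw [hq] at hBB
      linarith
    have hI2 : (0 : ℝ) ≤ I2 := integral_nonneg fun a => sq_nonneg _
    have hPLx := hPL x
    have ha : L * η ^ 2 ≤ η := by nlinarith [mul_le_mul_of_nonneg_left hηL hη0]
    have h5 : L * η ^ 2 / 2 * I2 ≤ η / 2 * I2 := by
      linarith [mul_le_mul_of_nonneg_right ha hI2]
    have h6 : η * (‖g‖ ^ 2 / δ) ≤ η * (2 * I1 - I2) :=
      mul_le_mul_of_nonneg_left hkey hη0
    have h7 : (η / δ) * (2 * μ * (f x - f xstar)) ≤ (η / δ) * ‖g‖ ^ 2 :=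
      mul_le_mul_of_nonneg_left hPLx (div_nonneg hη0 hδ.le)
    have hq2 : η * (‖g‖ ^ 2 / δ) = (η / δ) * ‖g‖ ^ 2 := by ring
    rw [hq2] at h6
    ring_nf
    ring_nf at hmono h5 h6 h7
    linarith only [hmono, h5, h6, h7]
  intro k
  induction k with
  | zero =>
    have : (cgdIter C f' η x0 0) = fun _ => x0 := rfl
    rw [this]
    simp
  | succ n ih =>
    set r := 1 - η * μ / δ with hr
    set X := cgdIter C f' η x0 with hX
    set Qn := (Measure.pi fun _ : Fin n => P) with hQn
    have hmp := measurePreserving_piFinSuccAbove (fun _ : Fin (n + 1) => P) (Fin.last n)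
    set e := MeasurableEquiv.piFinSuccAbove (fun _ : Fin (n + 1) => Ω₀) (Fin.last n) with he
    set F' : Ω₀ × (Fin n → Ω₀) → ℝ :=
      fun p => f (X n p.2 - η • C n (f' (X n p.2)) p.1) with hF'
    have hFe : ∀ ω : Fin (n + 1) → Ω₀, f (X (n + 1) ω) = F' (e ω) := by
      intro ω
      have hcomp : (fun j : Fin n => ω ((Fin.last n).succAbove j)) = ω ∘ Fin.castSucc := by
        funext j
        rw [Fin.succAbove_last]
        rfl
      show f (X (n + 1) ω) = f (X n (fun j => ω ((Fin.last n).succAbove j)) -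
        η • C n (f' (X n (fun j => ω ((Fin.last n).succAbove j)))) (ω (Fin.last n)))
      rw [hcomp]
      rfl
    have hIntF' : Integrable F' (P.prod Qn) := by
      have h0 := hintf (n + 1)
      have h1 : (fun ω => f (X (n + 1) ω)) = F' ∘ e := funext hFe
      rw [h1] at h0
      exact (hmp.integrable_comp_emb e.measurableEmbedding).mp h0
    have h1 : ∫ ω, f (X (n + 1) ω) ∂(Measure.pi fun _ : Fin (n + 1) => P)
        = ∫ p, F' p ∂(P.prod Qn) := by
      rw [show (fun ω => f (X (n + 1) ω)) = fun ω => F' (e ω) from funext hFe]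
      exact hmp.integral_comp' F'
    rw [h1, integral_prod_symm F' hIntF']
    have hslice : ∀ᵐ ω' ∂Qn, Integrable (fun a => F' (a, ω')) P := hIntF'.prod_left_ae
    have hGint : Integrable (fun ω' => ∫ a, F' (a, ω') ∂P) Qn := hIntF'.integral_prod_right
    have hbint : Integrable (fun ω' => r * f (X n ω') + (η * μ / δ) * f xstar) Qn :=
      ((hintf n).const_mul _).add (integrable_const _)
    have hmono : ∫ ω', (∫ a, F' (a, ω') ∂P) ∂Qn ≤
        ∫ ω', (r * f (X n ω') + (η * μ / δ) * f xstar) ∂Qn := by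
      refine integral_mono_ae hGint hbint ?_
      filter_upwards [hslice] with ω' hsl
      exact hstep n (X n ω') hsl
    have hRHS : ∫ ω', (r * f (X n ω') + (η * μ / δ) * f xstar) ∂Qn
        = r * (∫ ω', f (X n ω') ∂Qn) + (η * μ / δ) * f xstar := by
      rw [integral_add ((hintf n).const_mul _) (integrable_const _), integral_const_mul,
        integral_const, probReal_univ, one_smul]
    rw [hRHS] at hmono
    have h1μδ : η * μ / δ = 1 - r := by rw [hr]; ring
    have h2 : r * (∫ ω', f (X n ω') ∂Qn) + (η * μ / δ) * f xstar - f xstar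
        = r * ((∫ ω', f (X n ω') ∂Qn) - f xstar) := by rw [h1μδ]; ring
    have h4 : (∫ ω', ∫ a, F' (a, ω') ∂P ∂Qn) - f xstar
        ≤ r * ((∫ ω', f (X n ω') ∂Qn) - f xstar) := by
      rw [← h2]; linarith only [hmono]
    have h5' : r * ((∫ ω', f (X n ω') ∂Qn) - f xstar) ≤ r ^ (n + 1) * (f x0 - f xstar) := by
      rw [pow_succ, mul_comm (r ^ n) r, mul_assoc]
      exact mul_le_mul_of_nonneg_left ih hr0
    exact le_trans h4 h5'
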